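/- Let N = 4 and let p be the design with support 𝒲 = {(1,1,0,0), (0,0,1,1), (1,0,0,1), (0,1,1,0)}, each assignment having probability 1/4 (so π_i = 1/2 for all i). With the full substitute sets G*((1,1,0,0)) = G*((0,0,1,1)) = {(1,0,0,1),(0,1,1,0)} and G*((1,0,0,1)) = G*((0,1,1,0)) = {(1,1,0,0),(0,0,1,1)}, the contrast variance estimator satisfies, for every choice of potential outcomes, E[V̂_sub(W)] = Var(τ̂) + (Y(1) − Y(0))ᵀ·Q·(Y(1) − Y(0)), where Q = (1/16)·v·vᵀ with v = (1, −1, 1, −1)ᵀ; equivalently, E[V̂_sub(W)] = Var(τ̂) + (1/16)·((Y_1(1)−Y_1(0)) − (Y_2(1)−Y_2(0)) + (Y_3(1)−Y_3(0)) − (Y_4(1)−Y_4(0)))². In particular V̂_sub is the Neymanian decomposition-based estimator associated with this Q. -/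

import Mathlib

open Finset
open scoped Classical

noncomputable section

/-- Expectation under the design. -/
def expct (N : ℕ) (p f : (Fin N → Bool) → ℝ) : ℝ :=
  ∑ w : Fin N → Bool, p w * f w

/-- Average treatment effect. -/
def tauATE (N : ℕ) (Y1 Y0 : Fin N → ℝ) : ℝ :=
  (1 / (N : ℝ)) * ∑ i, (Y1 i - Y0 i)

/-- Observed outcome of unit `i` under assignment `w`. -/
def yObs (N : ℕ) (Y1 Y0 : Fin N → ℝ) (w : Fin N → Bool) (i : Fin N) : ℝ :=
  if w i then Y1 i else Y0 i

/-- `l_i(w) = 1` if treated, `−1` if control. -/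
def ell (N : ℕ) (w : Fin N → Bool) (i : Fin N) : ℝ :=
  if w i then 1 else -1

/-- The HT (difference-in-means) estimator when `π_i = 1/2`. -/
def tauDM (N : ℕ) (Y1 Y0 : Fin N → ℝ) (w : Fin N → Bool) : ℝ :=
  (2 / (N : ℝ)) * ((∑ i, if w i then yObs N Y1 Y0 w i else 0)
    - ∑ i, if w i then 0 else yObs N Y1 Y0 w i)

/-- Design-based variance of `τ̂`. -/
def varDM (N : ℕ) (p : (Fin N → Bool) → ℝ) (Y1 Y0 : Fin N → ℝ) : ℝ :=
  expct N p (fun w => (tauDM N Y1 Y0 w - tauATE N Y1 Y0) ^ 2)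

/-- The contrast variance estimator. -/
def Vsub (N : ℕ) (p : (Fin N → Bool) → ℝ) (Y1 Y0 : Fin N → ℝ)
    (G : (Fin N → Bool) → Finset (Fin N → Bool)) (W : Fin N → Bool) : ℝ :=
  (4 / (N : ℝ) ^ 2) * ∑ w : Fin N → Bool,
    if 0 < p w ∧ W ∈ G w then
      (p w / p W) * (1 / ((G w).card : ℝ)) * (∑ i, ell N w i * yObs N Y1 Y0 W i) ^ 2
    else 0

/-- The four assignment vectors of the toy design. -/
def wA : Fin 4 → Bool := ![true, true, false, false]
def wB : Fin 4 → Bool := ![false, false, true, true]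
def wC : Fin 4 → Bool := ![true, false, false, true]
def wD : Fin 4 → Bool := ![false, true, true, false]

/-- The toy design: each of the four assignments has probability 1/4. -/
def pToy (w : Fin 4 → Bool) : ℝ :=
  if w = wA ∨ w = wB ∨ w = wC ∨ w = wD then 1 / 4 else 0

/-- Full substitute sets for the toy design. -/
def GToy (w : Fin 4 → Bool) : Finset (Fin 4 → Bool) :=
  if w = wA ∨ w = wB then {wC, wD}
  else if w = wC ∨ w = wD then {wA, wB}
  else ∅

lemma sum4 (g : (Fin 4 → Bool) → ℝ)
    (h : ∀ w, w ≠ wA → w ≠ wB → w ≠ wC → w ≠ wD → g w = 0) :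
    ∑ w : Fin 4 → Bool, g w = g wA + g wB + g wC + g wD := by
  rw [← Finset.sum_subset (Finset.subset_univ ({wA, wB, wC, wD} : Finset (Fin 4 → Bool)))]
  · rw [Finset.sum_insert (by decide), Finset.sum_insert (by decide),
      Finset.sum_insert (by decide), Finset.sum_singleton]
    ring
  · intro x _ hx
    simp only [Finset.mem_insert, Finset.mem_singleton, not_or] at hx
    exact h x hx.1 hx.2.1 hx.2.2.1 hx.2.2.2

/-- Proposition 2: for the toy design, the contrast estimator with full substitute
sets is the Neymanian decomposition-based estimator with `Q = (1/16)·v·vᵀ`,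
`v = (1,−1,1,−1)ᵀ`; i.e. its expectation equals
`Var(τ̂) + (1/16)·(τ₁ − τ₂ + τ₃ − τ₄)²` where `τ_i = Y_i(1) − Y_i(0)`. -/
theorem contrast_toy_design
    (Y1 Y0 : Fin 4 → ℝ) :
    expct 4 pToy (Vsub 4 pToy Y1 Y0 GToy) =
      varDM 4 pToy Y1 Y0 +
        (1 / 16) * ((Y1 0 - Y0 0) - (Y1 1 - Y0 1) + (Y1 2 - Y0 2) - (Y1 3 - Y0 3)) ^ 2 := by
  have hp0 : ∀ w : Fin 4 → Bool, w ≠ wA → w ≠ wB → w ≠ wC → w ≠ wD → pToy w = 0 := by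
    intro w h1 h2 h3 h4; simp [pToy, h1, h2, h3, h4]
  have Vexp : ∀ W : Fin 4 → Bool, Vsub 4 pToy Y1 Y0 GToy W =
      (4 / (4 : ℝ) ^ 2) *
        ((if 0 < pToy wA ∧ W ∈ GToy wA then
            (pToy wA / pToy W) * (1 / ((GToy wA).card : ℝ)) *
              (∑ i, ell 4 wA i * yObs 4 Y1 Y0 W i) ^ 2 else 0) +
         (if 0 < pToy wB ∧ W ∈ GToy wB then
            (pToy wB / pToy W) * (1 / ((GToy wB).card : ℝ)) *
              (∑ i, ell 4 wB i * yObs 4 Y1 Y0 W i) ^ 2 else 0) +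
         (if 0 < pToy wC ∧ W ∈ GToy wC then
            (pToy wC / pToy W) * (1 / ((GToy wC).card : ℝ)) *
              (∑ i, ell 4 wC i * yObs 4 Y1 Y0 W i) ^ 2 else 0) +
         (if 0 < pToy wD ∧ W ∈ GToy wD then
            (pToy wD / pToy W) * (1 / ((GToy wD).card : ℝ)) *
              (∑ i, ell 4 wD i * yObs 4 Y1 Y0 W i) ^ 2 else 0)) := by
    intro W
    unfold Vsub
    rw [sum4]
    · norm_num
    · intro w h1 h2 h3 h4
      rw [if_neg]
      rintro ⟨hpos, -⟩
      rw [hp0 w h1 h2 h3 h4] at hpos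
      exact lt_irrefl 0 hpos
  have eA : expct 4 pToy (Vsub 4 pToy Y1 Y0 GToy) =
      pToy wA * Vsub 4 pToy Y1 Y0 GToy wA + pToy wB * Vsub 4 pToy Y1 Y0 GToy wB +
      pToy wC * Vsub 4 pToy Y1 Y0 GToy wC + pToy wD * Vsub 4 pToy Y1 Y0 GToy wD := by
    unfold expct
    rw [sum4]
    intro w h1 h2 h3 h4
    rw [hp0 w h1 h2 h3 h4, zero_mul]
  have eV : varDM 4 pToy Y1 Y0 =
      pToy wA * (tauDM 4 Y1 Y0 wA - tauATE 4 Y1 Y0) ^ 2 +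
      pToy wB * (tauDM 4 Y1 Y0 wB - tauATE 4 Y1 Y0) ^ 2 +
      pToy wC * (tauDM 4 Y1 Y0 wC - tauATE 4 Y1 Y0) ^ 2 +
      pToy wD * (tauDM 4 Y1 Y0 wD - tauATE 4 Y1 Y0) ^ 2 := by
    unfold varDM expct
    rw [sum4]
    intro w h1 h2 h3 h4
    rw [hp0 w h1 h2 h3 h4, zero_mul]
  rw [eA, eV, Vexp wA, Vexp wB, Vexp wC, Vexp wD]
  have nAB : wA ≠ wB := by decide
  have nAC : wA ≠ wC := by decide
  have nAD : wA ≠ wD := by decide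
  have nBC : wB ≠ wC := by decide
  have nBD : wB ≠ wD := by decide
  have nCD : wC ≠ wD := by decide
  have cCD : ((({wC, wD} : Finset (Fin 4 → Bool)).card : ℝ)) = 2 := by
    rw [Finset.card_insert_of_notMem (by simp [nCD]), Finset.card_singleton]; norm_num
  have cAB : ((({wA, wB} : Finset (Fin 4 → Bool)).card : ℝ)) = 2 := by
    rw [Finset.card_insert_of_notMem (by simp [nAB]), Finset.card_singleton]; norm_num
  have gA : GToy wA = {wC, wD} := by rw [GToy, if_pos (Or.inl rfl)]
  have gB : GToy wB = {wC, wD} := by rw [GToy, if_pos (Or.inr rfl)]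
  have gC : GToy wC = {wA, wB} := by
    rw [GToy, if_neg (by simp [nAC.symm, nBC.symm]), if_pos (Or.inl rfl)]
  have gD : GToy wD = {wA, wB} := by
    rw [GToy, if_neg (by simp [nAD.symm, nBD.symm]), if_pos (Or.inr rfl)]
  have hA : pToy wA = 1/4 := by rw [pToy, if_pos (Or.inl rfl)]
  have hB : pToy wB = 1/4 := by rw [pToy, if_pos (Or.inr (Or.inl rfl))]
  have hC : pToy wC = 1/4 := by rw [pToy, if_pos (Or.inr (Or.inr (Or.inl rfl)))]
  have hD : pToy wD = 1/4 := by rw [pToy, if_pos (Or.inr (Or.inr (Or.inr rfl)))]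
  simp only [gA, gB, gC, gD, hA, hB, hC, hD, cCD, cAB, Finset.mem_insert,
    Finset.mem_singleton, nAB, nAC, nAD, nBC, nBD, nCD,
    nAB.symm, nAC.symm, nAD.symm, nBC.symm, nBD.symm, nCD.symm,
    or_false, false_or, or_true, true_or]
  norm_num [tauDM, tauATE, ell, yObs, Fin.sum_univ_four, wA, wB, wC, wD, Matrix.cons_val_two, Matrix.cons_val_three, Matrix.tail_cons, Matrix.head_cons]
  ring
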